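/- Lower bound for the C_p functional, p ≥ 2 (Lemma 2.6): Let p ≥ 2. Then for all ξ, η ∈ ℂⁿ, C_p(ξ,η) ≥ c₁(p)|η|^p, where c₁(p) := inf_{(s,t)∈ℝ²\{(0,0)}} [ (t²+s²+2s+1)^{p/2} − 1 − ps ] / (t²+s²)^{p/2}; moreover c₁(p) ∈ (0,1]. -/

import Mathlib

/-- The functional `C_p(ξ,η) = |ξ|^p - |ξ-η|^p - p|ξ-η|^{p-2} Re⟨ξ-η, η⟩` on `ℂⁿ`. -/
noncomputable def Cp (n : ℕ) (p : ℝ) (ξ η : EuclideanSpace ℂ (Fin n)) : ℝ :=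
  ‖ξ‖ ^ p - ‖ξ - η‖ ^ p - p * ‖ξ - η‖ ^ (p - 2) * (inner ℂ (ξ - η) η : ℂ).re

/-- The sharp constant `c₁(p)`: the infimum over `(s,t) ≠ (0,0)` of
`[(t²+s²+2s+1)^{p/2} - 1 - ps] / (t²+s²)^{p/2}`. -/
noncomputable def c1 (p : ℝ) : ℝ :=
  sInf { r : ℝ | ∃ s t : ℝ, ¬(s = 0 ∧ t = 0) ∧
    r = ((t ^ 2 + s ^ 2 + 2 * s + 1) ^ (p / 2) - 1 - p * s) / (t ^ 2 + s ^ 2) ^ (p / 2) }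


set_option maxHeartbeats 1000000

open Real

private lemma CpAux.bern {p : ℝ} (hp : 2 ≤ p) (s t : ℝ) :
    p / 2 * (t ^ 2 + s ^ 2) ≤ (t ^ 2 + s ^ 2 + 2 * s + 1) ^ (p / 2) - 1 - p * s := by
  have h := one_add_mul_self_le_rpow_one_add (s := t ^ 2 + s ^ 2 + 2 * s)
    (by nlinarith [sq_nonneg (s + 1), sq_nonneg t]) (p := p / 2) (by linarith)
  have e : (1 : ℝ) + (t ^ 2 + s ^ 2 + 2 * s) = t ^ 2 + s ^ 2 + 2 * s + 1 := by ring
  rw [e] at h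
  nlinarith [h]

private lemma CpAux.F_lower {p : ℝ} (hp : 2 ≤ p) (s t : ℝ) (hq : 0 < t ^ 2 + s ^ 2) :
    (t ^ 2 + s ^ 2) ^ (p / 2) / ((2:ℝ) ^ (p + 2) * (p + 1)) ^ p
      ≤ (t ^ 2 + s ^ 2 + 2 * s + 1) ^ (p / 2) - 1 - p * s := by
  set q : ℝ := t ^ 2 + s ^ 2 with hqdef
  set K : ℝ := (2:ℝ) ^ (p + 2) * (p + 1) with hKdef
  have h2pos : (0:ℝ) < (2:ℝ) ^ (p + 2) := rpow_pos_of_pos two_pos _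
  have h16 : (16:ℝ) ≤ (2:ℝ) ^ (p + 2) := by
    calc (16:ℝ) = (2:ℝ) ^ (4:ℝ) := by norm_num
    _ ≤ (2:ℝ) ^ (p + 2) := rpow_le_rpow_of_exponent_le one_le_two (by linarith)
  have hK48 : (48:ℝ) ≤ K := by
    have : (16:ℝ) * 3 ≤ (2:ℝ) ^ (p + 2) * (p + 1) := by nlinarith
    linarith [this]
  have hK1 : (1:ℝ) ≤ K := by linarith
  have hKpos : (0:ℝ) < K := by linarith
  have hKp1 : (1:ℝ) ≤ K ^ p := one_le_rpow hK1 (by linarith)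
  have hKppos : (0:ℝ) < K ^ p := rpow_pos_of_pos hKpos _
  have hKKp : K ≤ K ^ p := by
    calc K = K ^ (1:ℝ) := (rpow_one K).symm
    _ ≤ K ^ p := rpow_le_rpow_of_exponent_le hK1 (by linarith)
  have h2K : (2:ℝ) ^ (p + 2) ≤ K ^ p := by
    refine le_trans ?_ hKKp
    nlinarith
  have hFq : p / 2 * q ≤ (t ^ 2 + s ^ 2 + 2 * s + 1) ^ (p / 2) - 1 - p * s :=
    CpAux.bern hp s t
  have hqF : q ≤ (t ^ 2 + s ^ 2 + 2 * s + 1) ^ (p / 2) - 1 - p * s := by nlinarith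
  rcases le_or_gt q 1 with hq1 | hq1
  · -- small q
    have h1 : q ^ (p / 2) ≤ q ^ (1:ℝ) := rpow_le_rpow_of_exponent_ge hq hq1 (by linarith)
    rw [rpow_one] at h1
    have h2 : q ^ (p / 2) / K ^ p ≤ q ^ (p / 2) := by
      apply div_le_self (rpow_nonneg hq.le _) hKp1
    linarith
  rcases le_or_gt q (K ^ 2) with hq2 | hq2
  · -- middle q
    have h1 : q ^ (p / 2) ≤ q * K ^ p := by
      have e0 : q ^ (p / 2) = q ^ (p / 2 - 1 + 1) := by congr 1; ring
      have e1 : q ^ (p / 2) = q * q ^ (p / 2 - 1) := by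
        rw [e0, rpow_add_one hq.ne']; ring
      have e2 : q ^ (p / 2 - 1) ≤ (K ^ 2) ^ (p / 2 - 1) :=
        rpow_le_rpow hq.le hq2 (by linarith)
      have e3 : (K ^ 2) ^ (p / 2 - 1) ≤ K ^ p := by
        rw [← rpow_natCast K 2, ← rpow_mul hKpos.le]
        apply rpow_le_rpow_of_exponent_le hK1
        push_cast
        linarith
      calc q ^ (p / 2) = q * q ^ (p / 2 - 1) := e1
      _ ≤ q * ((K ^ 2) ^ (p / 2 - 1)) := by
          exact mul_le_mul_of_nonneg_left e2 (by linarith)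
      _ ≤ q * K ^ p := mul_le_mul_of_nonneg_left e3 (by linarith)
    have h2 : q ^ (p / 2) / K ^ p ≤ q := by
      rw [div_le_iff₀ hKppos]; linarith
    linarith
  · -- large q
    have hr := Real.sqrt_nonneg q
    have hrr : Real.sqrt q * Real.sqrt q = q := Real.mul_self_sqrt hq.le
    have hKr : K ≤ Real.sqrt q := by
      rw [show K = Real.sqrt (K^2) from (Real.sqrt_sq hKpos.le).symm]
      exact Real.sqrt_le_sqrt hq2.le
    have hr1 : (1:ℝ) ≤ Real.sqrt q := by linarith
    have habs : |s| ≤ Real.sqrt q := by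
      rw [← Real.sqrt_sq_eq_abs s]
      apply Real.sqrt_le_sqrt
      nlinarith [sq_nonneg t]
    have hs_le : s ≤ Real.sqrt q := le_trans (le_abs_self s) habs
    have hs_ge : -Real.sqrt q ≤ s := neg_le_of_neg_le (le_trans (neg_le_abs s) habs)
    -- x ≥ q/4
    have hx4 : q / 4 ≤ t ^ 2 + s ^ 2 + 2 * s + 1 := by
      have hqr : t ^ 2 + s ^ 2 + 2 * s + 1 = q + 2 * s + 1 := by rw [hqdef]
      nlinarith [hrr, hKr, hr1, hK48]
    have hxnn : (0:ℝ) ≤ t ^ 2 + s ^ 2 + 2 * s + 1 := by nlinarith [sq_nonneg (s+1)]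
    have hx_rpow : (q / 4) ^ (p / 2) ≤ (t ^ 2 + s ^ 2 + 2 * s + 1) ^ (p / 2) :=
      rpow_le_rpow (by positivity) hx4 (by linarith)
    have h4p : ((4:ℝ)) ^ (p / 2) = (2:ℝ) ^ p := by
      rw [show (4:ℝ) = (2:ℝ) ^ (2:ℝ) by norm_num, ← rpow_mul (by norm_num)]
      ring_nf
    have hdiv : (q / 4) ^ (p / 2) = q ^ (p / 2) / (2:ℝ) ^ p := by
      rw [div_rpow hq.le (by norm_num), h4p]
    -- 1 + p s ≤ q^{p/2}/2^{p+2}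
    have hqq : q ^ (1:ℝ) ≤ q ^ (p / 2) :=
      rpow_le_rpow_of_exponent_le (by nlinarith [sq_nonneg K]) (by linarith)
    rw [rpow_one] at hqq
    have hq2p : (2:ℝ) ^ (p + 2) * (1 + p * s) ≤ q := by
      have h1 : 1 + p * s ≤ 1 + p * Real.sqrt q := by nlinarith
      have h2 : (2:ℝ) ^ (p + 2) * ((p + 1) * Real.sqrt q) ≤ q := by
        calc (2:ℝ) ^ (p + 2) * ((p + 1) * Real.sqrt q) = K * Real.sqrt q := by ring
        _ ≤ Real.sqrt q * Real.sqrt q := by nlinarith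
        _ = q := hrr
      have h3 : 1 + p * Real.sqrt q ≤ (p + 1) * Real.sqrt q := by nlinarith
      nlinarith
    have h1ps : 1 + p * s ≤ q ^ (p / 2) / (2:ℝ) ^ (p + 2) := by
      rw [le_div_iff₀ h2pos]
      calc (1 + p * s) * (2:ℝ) ^ (p + 2) = (2:ℝ) ^ (p + 2) * (1 + p * s) := by ring
      _ ≤ q := hq2p
      _ ≤ q ^ (p / 2) := hqq
    have h22 : (2:ℝ) ^ (p + 2) = 4 * (2:ℝ) ^ p := by
      rw [rpow_add two_pos]
      norm_num
      ring
    have hqp_nn : (0:ℝ) ≤ q ^ (p / 2) := rpow_nonneg hq.le _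
    have h2ppos : (0:ℝ) < (2:ℝ) ^ p := rpow_pos_of_pos two_pos _
    have hF : q ^ (p / 2) / (2:ℝ) ^ (p + 2)
        ≤ (t ^ 2 + s ^ 2 + 2 * s + 1) ^ (p / 2) - 1 - p * s := by
      have := hx_rpow
      rw [hdiv] at this
      have key : q ^ (p / 2) / (4 * (2:ℝ) ^ p) ≤ q ^ (p / 2) / (2:ℝ) ^ p - (1 + p * s) := by
        have h1ps' : 1 + p * s ≤ q ^ (p / 2) / (4 * (2:ℝ) ^ p) := by rw [← h22]; exact h1ps
        have : q ^ (p / 2) / (4 * (2:ℝ) ^ p) * 2 ≤ q ^ (p / 2) / (2:ℝ) ^ p := by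
          rw [show q ^ (p / 2) / (4 * (2:ℝ) ^ p) * 2 = q ^ (p / 2) / (2 * (2:ℝ) ^ p) by ring]
          exact div_le_div_of_nonneg_left hqp_nn h2ppos (by linarith)
        linarith
      rw [h22]
      linarith
    have hfin : q ^ (p / 2) / K ^ p ≤ q ^ (p / 2) / (2:ℝ) ^ (p + 2) :=
      div_le_div_of_nonneg_left hqp_nn h2pos h2K
    linarith

private lemma CpAux.mem_lb {p : ℝ} (hp : 2 ≤ p) :
    ∀ r ∈ { r : ℝ | ∃ s t : ℝ, ¬(s = 0 ∧ t = 0) ∧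
      r = ((t ^ 2 + s ^ 2 + 2 * s + 1) ^ (p / 2) - 1 - p * s) / (t ^ 2 + s ^ 2) ^ (p / 2) },
      1 / ((2:ℝ) ^ (p + 2) * (p + 1)) ^ p ≤ r := by
  rintro r ⟨s, t, hst, rfl⟩
  have hq : 0 < t ^ 2 + s ^ 2 := by
    rcases not_and_or.mp hst with h | h
    · have h2 : 0 < s ^ 2 := by positivity
      nlinarith [sq_nonneg t]
    · have h2 : 0 < t ^ 2 := by positivity
      nlinarith [sq_nonneg s]
  have hqp : 0 < (t ^ 2 + s ^ 2) ^ (p / 2) := rpow_pos_of_pos hq _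
  rw [le_div_iff₀ hqp]
  calc 1 / ((2:ℝ) ^ (p + 2) * (p + 1)) ^ p * (t ^ 2 + s ^ 2) ^ (p / 2)
      = (t ^ 2 + s ^ 2) ^ (p / 2) / ((2:ℝ) ^ (p + 2) * (p + 1)) ^ p := by ring
  _ ≤ (t ^ 2 + s ^ 2 + 2 * s + 1) ^ (p / 2) - 1 - p * s := CpAux.F_lower hp s t hq

private lemma CpAux.bddBelow {p : ℝ} (hp : 2 ≤ p) :
    BddBelow { r : ℝ | ∃ s t : ℝ, ¬(s = 0 ∧ t = 0) ∧
      r = ((t ^ 2 + s ^ 2 + 2 * s + 1) ^ (p / 2) - 1 - p * s) / (t ^ 2 + s ^ 2) ^ (p / 2) } :=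
  ⟨_, fun r hr => CpAux.mem_lb hp r hr⟩

private lemma CpAux.c1_le {p : ℝ} (hp : 2 ≤ p) (s t : ℝ) (hst : ¬(s = 0 ∧ t = 0)) :
    c1 p ≤ ((t ^ 2 + s ^ 2 + 2 * s + 1) ^ (p / 2) - 1 - p * s) / (t ^ 2 + s ^ 2) ^ (p / 2) :=
  csInf_le (CpAux.bddBelow hp) ⟨s, t, hst, rfl⟩

private lemma CpAux.c1_ge {p : ℝ} (hp : 2 ≤ p) :
    1 / ((2:ℝ) ^ (p + 2) * (p + 1)) ^ p ≤ c1 p := by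
  apply le_csInf
  · exact ⟨_, 0, 1, by norm_num, rfl⟩
  · exact CpAux.mem_lb hp

private lemma CpAux.c1_pos {p : ℝ} (hp : 2 ≤ p) : 0 < c1 p := by
  have h := CpAux.c1_ge hp
  have h2 : (0:ℝ) < (2:ℝ) ^ (p + 2) * (p + 1) := by
    have := rpow_pos_of_pos (two_pos (α := ℝ)) (p + 2)
    nlinarith
  have h3 : (0:ℝ) < ((2:ℝ) ^ (p + 2) * (p + 1)) ^ p := rpow_pos_of_pos h2 _
  have : (0:ℝ) < 1 / ((2:ℝ) ^ (p + 2) * (p + 1)) ^ p := by positivity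
  linarith

private lemma CpAux.c1_le_one {p : ℝ} (hp : 2 ≤ p) : c1 p ≤ 1 := by
  apply le_of_forall_pos_le_add
  intro ε hε
  set T : ℝ := max 1 ((p / 2 - 1) / ε + 1) with hT
  have hT1 : (1:ℝ) ≤ T := le_max_left _ _
  have hT2 : (p / 2 - 1) / ε ≤ T := le_trans (by linarith) (le_max_right _ _)
  have hle := CpAux.c1_le hp (-(1/2)) T (by intro h; norm_num at h)
  have hbase : T ^ 2 + (-(1/2:ℝ)) ^ 2 + 2 * (-(1/2:ℝ)) + 1 = T ^ 2 + 1/4 := by ring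
  have hbase2 : T ^ 2 + (-(1/2:ℝ)) ^ 2 = T ^ 2 + 1/4 := by ring
  rw [hbase, hbase2] at hle
  have hD1 : (1:ℝ) ≤ T ^ 2 + 1/4 := by nlinarith
  have hDpos : (0:ℝ) < (T ^ 2 + 1/4) ^ (p / 2) := rpow_pos_of_pos (by linarith) _
  have hDge : T ≤ (T ^ 2 + 1/4) ^ (p / 2) := by
    have h1 : (T ^ 2 + 1/4) ^ (1:ℝ) ≤ (T ^ 2 + 1/4) ^ (p / 2) :=
      rpow_le_rpow_of_exponent_le hD1 (by linarith)
    rw [rpow_one] at h1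
    nlinarith
  have hnum : p / 2 - 1 ≤ ε * ((T ^ 2 + 1/4) ^ (p / 2)) := by
    have h1 : p / 2 - 1 ≤ ε * T := by
      rw [div_le_iff₀ hε] at hT2
      linarith
    nlinarith
  have hfrac : ((T ^ 2 + 1/4) ^ (p / 2) - 1 - p * (-(1/2))) / (T ^ 2 + 1/4) ^ (p / 2)
      ≤ 1 + ε := by
    rw [div_le_iff₀ hDpos]
    nlinarith
  linarith

private lemma CpAux.sq_rpow {y : ℝ} (hy : 0 ≤ y) (p : ℝ) : (y ^ 2) ^ (p / 2) = y ^ p := by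
  rw [← rpow_natCast y 2, ← rpow_mul hy]
  congr 1
  push_cast
  ring

private lemma CpAux.main {p : ℝ} (hp : 2 ≤ p) (n : ℕ) (ξ η : EuclideanSpace ℂ (Fin n)) :
    c1 p * ‖η‖ ^ p ≤ Cp n p ξ η := by
  have hppos : (0:ℝ) < p := by linarith
  by_cases hη : η = 0
  · subst hη
    simp [Cp, Real.zero_rpow hppos.ne']
  by_cases hξη : ξ = η
  · subst hξη
    have hrw : Cp n p ξ ξ = ‖ξ‖ ^ p := by
      simp [Cp, Real.zero_rpow hppos.ne']
    rw [hrw]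
    calc c1 p * ‖ξ‖ ^ p ≤ 1 * ‖ξ‖ ^ p :=
      mul_le_mul_of_nonneg_right (CpAux.c1_le_one hp) (rpow_nonneg (norm_nonneg _) _)
    _ = ‖ξ‖ ^ p := one_mul _
  · set a : EuclideanSpace ℂ (Fin n) := ξ - η with ha
    have haz : a ≠ 0 := sub_ne_zero.mpr hξη
    have hA : (0:ℝ) < ‖a‖ := norm_pos_iff.mpr haz
    have hB : (0:ℝ) < ‖η‖ := norm_pos_iff.mpr hη
    set A : ℝ := ‖a‖ with hAdef
    set B : ℝ := ‖η‖ with hBdef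
    set R : ℝ := (inner ℂ a η : ℂ).re with hR
    have hCS : |R| ≤ A * B := by
      calc |R| ≤ ‖(inner ℂ a η : ℂ)‖ := Complex.abs_re_le_norm _
      _ ≤ A * B := norm_inner_le_norm a η
    set s : ℝ := R / A ^ 2 with hs
    have hs2 : s ^ 2 ≤ B ^ 2 / A ^ 2 := by
      have hR2 : R ^ 2 ≤ A ^ 2 * B ^ 2 := by
        nlinarith [sq_abs R, abs_nonneg R, mul_nonneg hA.le hB.le]
      rw [hs, div_pow, div_le_div_iff₀ (by positivity) (by positivity)]
      nlinarith [mul_le_mul_of_nonneg_right hR2 (sq_nonneg A)]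
    set t : ℝ := Real.sqrt (B ^ 2 / A ^ 2 - s ^ 2) with ht
    have hts : t ^ 2 + s ^ 2 = B ^ 2 / A ^ 2 := by
      rw [ht, Real.sq_sqrt (by linarith)]
      ring
    have hq : 0 < t ^ 2 + s ^ 2 := by
      rw [hts]
      positivity
    have hst : ¬(s = 0 ∧ t = 0) := by
      rintro ⟨h1, h2⟩
      rw [h1, h2] at hq
      norm_num at hq
    have hRs : R = s * A ^ 2 := by
      rw [hs]
      field_simp
    have hξ2 : ‖ξ‖ ^ 2 = A ^ 2 * (t ^ 2 + s ^ 2 + 2 * s + 1) := by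
      have h1 : ξ = a + η := by rw [ha]; abel
      have h2 : ‖a + η‖ ^ 2 = A ^ 2 + 2 * R + B ^ 2 := by
        rw [norm_add_sq (𝕜 := ℂ)]
        simp [hR, hAdef, hBdef]
      rw [h1, h2, hts, hRs]
      field_simp
      ring
    have hxnn : (0:ℝ) ≤ t ^ 2 + s ^ 2 + 2 * s + 1 := by nlinarith [sq_nonneg (s + 1), sq_nonneg t]
    have hξp : ‖ξ‖ ^ p = A ^ p * (t ^ 2 + s ^ 2 + 2 * s + 1) ^ (p / 2) := by
      rw [← CpAux.sq_rpow (norm_nonneg ξ) p, hξ2, mul_rpow (by positivity) hxnn,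
        CpAux.sq_rpow hA.le]
    have hB2 : B ^ 2 = A ^ 2 * (t ^ 2 + s ^ 2) := by
      rw [hts]
      field_simp
    have hηp : B ^ p = A ^ p * (t ^ 2 + s ^ 2) ^ (p / 2) := by
      rw [← CpAux.sq_rpow hB.le p, hB2, mul_rpow (by positivity) hq.le, CpAux.sq_rpow hA.le]
    have hA2p : A ^ (p - 2) * A ^ 2 = A ^ p := by
      rw [← rpow_natCast A 2, ← rpow_add hA]
      congr 1
      push_cast
      ring
    have hApos : (0:ℝ) < A ^ p := rpow_pos_of_pos hA p
    have hqp : (0:ℝ) < (t ^ 2 + s ^ 2) ^ (p / 2) := rpow_pos_of_pos hq _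
    have key : c1 p * (t ^ 2 + s ^ 2) ^ (p / 2)
        ≤ (t ^ 2 + s ^ 2 + 2 * s + 1) ^ (p / 2) - 1 - p * s := by
      have h := CpAux.c1_le hp s t hst
      rw [le_div_iff₀ hqp] at h
      linarith
    have hCp : Cp n p ξ η = A ^ p * ((t ^ 2 + s ^ 2 + 2 * s + 1) ^ (p / 2) - 1 - p * s) := by
      rw [Cp, ← ha, ← hR, ← hAdef, hξp, hRs, ← hA2p]
      ring
    rw [hCp, hηp]
    calc c1 p * (A ^ p * (t ^ 2 + s ^ 2) ^ (p / 2))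
        = A ^ p * (c1 p * (t ^ 2 + s ^ 2) ^ (p / 2)) := by ring
    _ ≤ A ^ p * ((t ^ 2 + s ^ 2 + 2 * s + 1) ^ (p / 2) - 1 - p * s) :=
      mul_le_mul_of_nonneg_left key hApos.le

/-- Lower bound for the `C_p` functional for `p ≥ 2`: `C_p(ξ,η) ≥ c₁(p)|η|^p` for all
`ξ, η ∈ ℂⁿ`, and `c₁(p) ∈ (0,1]`. -/
theorem Cp_lower_bound (p : ℝ) (hp : 2 ≤ p) :
    (∀ (n : ℕ) (ξ η : EuclideanSpace ℂ (Fin n)), Cp n p ξ η ≥ c1 p * ‖η‖ ^ p)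
      ∧ 0 < c1 p ∧ c1 p ≤ 1 :=
  ⟨fun n ξ η => CpAux.main hp n ξ η, CpAux.c1_pos hp, CpAux.c1_le_one hp⟩
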